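/- arXiv:1902.00204 — 2 statements merged into one kernel-verified Lean document; each statement's English description precedes it below -/
import Mathlib

section
/- Let G and H be disjoint finite simple graphs and consider the Maker–Breaker total domination game on their disjoint union G ∪ H. If both G and H are D graphs, then G ∪ H is a D graph. If one of G, H is a D graph and the other is an N graph, then G ∪ H is an N graph. If both G and H are N graphs, then G ∪ H is an S graph. If at least one of G, H is an S graph, then G ∪ H is an S graph. -/
namespace MBTD

variable {V : Type*} [Fintype V] [DecidableEq V]

/-- `a` is a total dominating set of `G`: every vertex has a neighbour in `a`. -/
def IsTotalDomSet (G : SimpleGraph V) (a : Finset V) : Prop :=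
  ∀ v : V, ∃ u ∈ a, G.Adj u v

/-- `WinsAux win n turn a b` describes the generic positional game in which two players
alternately claim previously unclaimed vertices until every vertex is claimed.
Here `a` is the set of vertices claimed so far by the tracked player, `b` the set claimed by
the opponent, `turn = true` iff the tracked player is the next to move, and `n` is the number
of moves still to be played.  The tracked player wins iff `win` holds of the final position. -/
def WinsAux (win : Finset V → Finset V → Prop) : ℕ → Bool → Finset V → Finset V → Prop
  | 0, _, a, b => win a b
  | n + 1, true, a, b => ∃ v ∈ Finset.univ \ (a ∪ b), WinsAux win n false (insert v a) b
  | n + 1, false, a, b => ∀ v ∈ Finset.univ \ (a ∪ b), WinsAux win n true a (insert v b)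

/-- Dominator has a winning strategy in the Maker-Breaker total domination game on `G`,
where `dFirst = true` means Dominator moves first (the D-game) and `dFirst = false` means
Staller moves first (the S-game).  Dominator wins iff the set of vertices he has claimed at
the end of the game is a total dominating set of `G`. -/
def DominatorWinsMBTD (G : SimpleGraph V) (dFirst : Bool) : Prop :=
  WinsAux (fun a _ => IsTotalDomSet G a) (Fintype.card V) dFirst ∅ ∅

/-- Staller has a winning strategy in the Maker-Breaker total domination game on `G`,
where `dFirst = true` means Dominator moves first (the D-game) and `dFirst = false` means
Staller moves first (the S-game).  Staller wins iff she claims every vertex of the open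
neighbourhood of some vertex. -/
def StallerWinsMBTD (G : SimpleGraph V) (dFirst : Bool) : Prop :=
  WinsAux (fun a _ => ∃ v : V, ∀ u : V, G.Adj u v → u ∈ a) (Fintype.card V) (!dFirst) ∅ ∅

/-- `G` is a `𝒟` graph: Dominator wins both the D-game and the S-game. -/
def IsD (G : SimpleGraph V) : Prop :=
  DominatorWinsMBTD G true ∧ DominatorWinsMBTD G false

/-- `G` is an `𝒮` graph: Staller wins both the D-game and the S-game. -/
def IsS (G : SimpleGraph V) : Prop :=
  StallerWinsMBTD G true ∧ StallerWinsMBTD G false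

/-- `G` is an `𝒩` graph: whichever player moves first wins. -/
def IsN (G : SimpleGraph V) : Prop :=
  DominatorWinsMBTD G true ∧ StallerWinsMBTD G false

lemma free_insert_left (v : V) (a b : Finset V) :
    Finset.univ \ (insert v a ∪ b) = (Finset.univ \ (a ∪ b)).erase v := by
  ext x; simp [and_comm]

lemma free_insert_right (v : V) (a b : Finset V) :
    Finset.univ \ (a ∪ insert v b) = (Finset.univ \ (a ∪ b)).erase v := by
  ext x; simp [and_comm]

lemma winsOfHolds (P : Finset V → Prop) (hm : ∀ {s s'}, s ⊆ s' → P s → P s') :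
    ∀ (n : ℕ) (t : Bool) (a b : Finset V), (Finset.univ \ (a ∪ b)).card = n → P a →
    WinsAux (fun s _ => P s) n t a b := by
  intro n
  induction n with
  | zero => intro t a b _ h; cases t <;> exact h
  | succ n ih =>
    intro t a b hc hP
    have hne : (Finset.univ \ (a ∪ b)).Nonempty := by rw [← Finset.card_pos, hc]; omega
    cases t
    · intro v hv
      exact ih true a (insert v b)
        (by rw [free_insert_right, Finset.card_erase_of_mem hv, hc]; omega) hP
    · obtain ⟨v, hv⟩ := hne
      exact ⟨v, hv, ih false (insert v a) b
        (by rw [free_insert_left, Finset.card_erase_of_mem hv, hc]; omega)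
        (hm (Finset.subset_insert _ _) hP)⟩


lemma master (P : Finset V → Prop) (hm : ∀ {s s'}, s ⊆ s' → P s → P s') :
    ∀ (k m m' : ℕ) (t t' : Bool) (a b a' b' : Finset V),
    m + m' ≤ k →
    (Finset.univ \ (a ∪ b)).card = m →
    (Finset.univ \ (a' ∪ b')).card = m' →
    Finset.univ \ (a' ∪ b') ⊆ Finset.univ \ (a ∪ b) →
    (∀ x ∈ Finset.univ \ (a ∪ b), x ∉ Finset.univ \ (a' ∪ b') → x ∈ a') →
    a ⊆ a' →
    (t = true → t' = true ∨ m' = 0) →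
    WinsAux (fun s _ => P s) m t a b → WinsAux (fun s _ => P s) m' t' a' b' := by
  intro k
  induction k with
  | zero =>
    intro m m' t t' a b a' b' hk hcm hcm' _ _ hsub _ hw
    obtain rfl : m = 0 := by omega
    obtain rfl : m' = 0 := by omega
    have : P a := by cases t <;> exact hw
    cases t' <;> exact hm hsub this
  | succ k ih =>
    intro m m' t t' a b a' b' hk hcm hcm' hFsub hE hsub hturn hw
    rcases Nat.eq_zero_or_eq_succ_pred m' with hm' | hm'
    · -- m' = 0 : goal is P a' (after draining the imagined game)
      subst hm'
      have hF' : Finset.univ \ (a' ∪ b') = ∅ := Finset.card_eq_zero.mp hcm'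
      rcases Nat.eq_zero_or_eq_succ_pred m with hm | hm
      · subst hm
        have : P a := by cases t <;> exact hw
        cases t' <;> exact hm hsub this
      · set n := m - 1
        rw [hm] at hw hcm
        have hFne : (Finset.univ \ (a ∪ b)).Nonempty := by
          rw [← Finset.card_pos, hcm]; omega
        cases t with
        | true =>
          obtain ⟨w, hwF, hw2⟩ := hw
          have hwa' : w ∈ a' := hE w hwF (by simp [hF'])
          refine ih n 0 false t' (insert w a) b a' b' (by omega)
            (by rw [free_insert_left, Finset.card_erase_of_mem hwF, hcm]; omega)
            hcm' (by simp [hF']) ?_ ?_ (by simp) hw2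
          · intro x hx _
            rw [free_insert_left] at hx
            exact hE x (Finset.mem_of_mem_erase hx) (by simp [hF'])
          · exact Finset.insert_subset hwa' hsub
        | false =>
          obtain ⟨w, hwF⟩ := hFne
          have hw2 := hw w hwF
          refine ih n 0 true t' a (insert w b) a' b' (by omega)
            (by rw [free_insert_right, Finset.card_erase_of_mem hwF, hcm]; omega)
            hcm' (by simp [hF']) ?_ hsub (by omega) hw2
          intro x hx _
          rw [free_insert_right] at hx
          exact hE x (Finset.mem_of_mem_erase hx) (by simp [hF'])
    · -- m' = n' + 1
      set n' := m' - 1 with hn'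
      rw [hm'] at hcm' ⊢
      have hF'ne : (Finset.univ \ (a' ∪ b')).Nonempty := by
        rw [← Finset.card_pos, hcm']; omega
      have hFne : (Finset.univ \ (a ∪ b)).Nonempty := hF'ne.mono hFsub
      have hm1 : m = (m - 1) + 1 := by
        have := Finset.card_pos.mpr hFne; omega
      set n := m - 1
      rw [hm1] at hw hcm
      cases t' with
      | true =>
        cases t with
        | true =>
          obtain ⟨w, hwF, hw2⟩ := hw
          by_cases hwF' : w ∈ Finset.univ \ (a' ∪ b')
          · refine ⟨w, hwF', ?_⟩
            refine ih n n' false false (insert w a) b (insert w a') b' (by omega)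
              (by rw [free_insert_left, Finset.card_erase_of_mem hwF, hcm]; omega)
              (by rw [free_insert_left, Finset.card_erase_of_mem hwF', hcm']; omega)
              ?_ ?_ (Finset.insert_subset_insert _ hsub) (by simp) hw2
            · rw [free_insert_left, free_insert_left]
              exact Finset.erase_subset_erase _ hFsub
            · intro x hx hx'
              rw [free_insert_left] at hx hx'
              have hxw : x ≠ w := Finset.ne_of_mem_erase hx
              have : x ∉ Finset.univ \ (a' ∪ b') := by
                intro hc; exact hx' (Finset.mem_erase.mpr ⟨hxw, hc⟩)
              exact Finset.mem_insert_of_mem (hE x (Finset.mem_of_mem_erase hx) this)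
          · have hwa' : w ∈ a' := hE w hwF hwF'
            refine ih n (n' + 1) false true (insert w a) b a' b' (by omega)
              (by rw [free_insert_left, Finset.card_erase_of_mem hwF, hcm]; omega)
              hcm' ?_ ?_ (Finset.insert_subset hwa' hsub) (by simp) hw2
            · intro x hx
              rw [free_insert_left]
              exact Finset.mem_erase.mpr ⟨fun h => hwF' (h ▸ hx), hFsub hx⟩
            · intro x hx hx'
              rw [free_insert_left] at hx
              exact hE x (Finset.mem_of_mem_erase hx) hx'
        | false =>
          obtain ⟨v, hvF'⟩ := hF'ne
          refine ⟨v, hvF', ?_⟩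
          refine ih (n + 1) n' false false a b (insert v a') b' (by omega)
            hcm
            (by rw [free_insert_left, Finset.card_erase_of_mem hvF', hcm']; omega)
            ?_ ?_ (hsub.trans (Finset.subset_insert _ _)) (by simp) hw
          · rw [free_insert_left]
            exact (Finset.erase_subset _ _).trans hFsub
          · intro x hx hx'
            rw [free_insert_left] at hx'
            by_cases hxv : x = v
            · subst hxv; exact Finset.mem_insert_self _ _
            · by_cases hxF' : x ∈ Finset.univ \ (a' ∪ b')
              · exact absurd (Finset.mem_erase.mpr ⟨hxv, hxF'⟩) hx'
              · exact Finset.mem_insert_of_mem (hE x hx hxF')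
      | false =>
        have ht : t = false := by
          cases t
          · rfl
          · rcases hturn rfl with h | h
            · exact absurd h (by simp)
            · omega
        subst ht
        intro v hvF'
        have hvF : v ∈ Finset.univ \ (a ∪ b) := hFsub hvF'
        have hw2 := hw v hvF
        refine ih n n' true true a (insert v b) a' (insert v b') (by omega)
          (by rw [free_insert_right, Finset.card_erase_of_mem hvF, hcm]; omega)
          (by rw [free_insert_right, Finset.card_erase_of_mem hvF', hcm']; omega)
          ?_ ?_ hsub (fun _ => Or.inl rfl) hw2
        · rw [free_insert_right, free_insert_right]
          exact Finset.erase_subset_erase _ hFsub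
        · intro x hx hx'
          rw [free_insert_right] at hx hx'
          have hxv : x ≠ v := Finset.ne_of_mem_erase hx
          have : x ∉ Finset.univ \ (a' ∪ b') := by
            intro hc; exact hx' (Finset.mem_erase.mpr ⟨hxv, hc⟩)
          exact hE x (Finset.mem_of_mem_erase hx) this



open Finset in
lemma pursuit {γ : Type*} [Fintype γ] [DecidableEq γ] (e : γ ↪ V)
    (Q1 : Finset γ → Prop) (h1 : ∀ {s s'}, s ⊆ s' → Q1 s → Q1 s')
    (Qc : Finset V → Prop)
    (hQc : ∀ (s : Finset γ) (A : Finset V), (∀ w ∈ s, e w ∈ A) → Q1 s → Qc A)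
    (hQm : ∀ {A A'}, A ⊆ A' → Qc A → Qc A') :
    ∀ (n m₁ : ℕ) (t t₁ : Bool) (a₁ b₁ : Finset γ) (A B : Finset V),
    (univ \ (A ∪ B)).card = n → (univ \ (a₁ ∪ b₁)).card = m₁ →
    (∀ w : γ, w ∈ univ \ (a₁ ∪ b₁) ↔ e w ∈ univ \ (A ∪ B)) →
    (∀ w ∈ a₁, e w ∈ A) →
    (t₁ = true → t = true) →
    WinsAux (fun s _ => Q1 s) m₁ t₁ a₁ b₁ →
    WinsAux (fun s _ => Qc s) n t A B := by
  intro n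
  induction n with
  | zero =>
    intro m₁ t t₁ a₁ b₁ A B hcn hcm hiff hsub _ hw
    have hFc : univ \ (A ∪ B) = (∅ : Finset V) := card_eq_zero.mp hcn
    have : univ \ (a₁ ∪ b₁) = (∅ : Finset γ) := by
      rw [eq_empty_iff_forall_notMem]
      intro w hw'
      have := (hiff w).mp hw'
      simp [hFc] at this
    obtain rfl : m₁ = 0 := by rw [← hcm, this, card_empty]
    have hQ : Q1 a₁ := by cases t₁ <;> exact hw
    have : Qc A := hQc a₁ A hsub hQ
    cases t <;> exact this
  | succ n ih =>
    intro m₁ t t₁ a₁ b₁ A B hcn hcm hiff hsub hturn hw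
    rcases Nat.eq_zero_or_eq_succ_pred m₁ with hm | hm
    · subst hm
      have hQ : Q1 a₁ := by cases t₁ <;> exact hw
      exact winsOfHolds Qc hQm (n+1) t A B hcn (hQc a₁ A hsub hQ)
    · set k := m₁ - 1
      rw [hm] at hw hcm
      have hFcne : (univ \ (A ∪ B)).Nonempty := by rw [← card_pos, hcn]; omega
      cases t with
      | true =>
        cases t₁ with
        | true =>
          obtain ⟨w, hwF, hw2⟩ := hw
          have hwFc : e w ∈ univ \ (A ∪ B) := (hiff w).mp hwF
          refine ⟨e w, hwFc, ih k false false (insert w a₁) b₁ (insert (e w) A) B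
            (by rw [free_insert_left, card_erase_of_mem hwFc, hcn]; omega)
            (by rw [free_insert_left, card_erase_of_mem hwF, hcm]; omega)
            ?_ ?_ (by simp) hw2⟩
          · intro w'
            rw [free_insert_left, free_insert_left, mem_erase, mem_erase, hiff w',
              e.injective.ne_iff]
          · intro w' hw'
            rcases mem_insert.mp hw' with h | h
            · subst h; exact mem_insert_self _ _
            · exact mem_insert_of_mem (hsub w' h)
        | false =>
          obtain ⟨v, hvFc⟩ := hFcne
          by_cases hv : ∃ w, e w = v
          · obtain ⟨w, rfl⟩ := hv
            have hwF : w ∈ univ \ (a₁ ∪ b₁) := (hiff w).mpr hvFc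
            have hw2 : WinsAux (fun s _ => Q1 s) k false (insert w a₁) b₁ := by
              refine master Q1 h1 ((k+1)+k) (k+1) k false false a₁ b₁ (insert w a₁) b₁
                (le_refl _) hcm
                (by rw [free_insert_left, card_erase_of_mem hwF, hcm]; omega)
                (by rw [free_insert_left]; exact erase_subset _ _)
                ?_ (subset_insert _ _) (by simp) hw
              intro x hx hx'
              rw [free_insert_left] at hx'
              by_cases hxw : x = w
              · subst hxw; exact mem_insert_self _ _
              · exact absurd (mem_erase.mpr ⟨hxw, hx⟩) hx'
            refine ⟨e w, hvFc, ih k false false (insert w a₁) b₁ (insert (e w) A) B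
              (by rw [free_insert_left, card_erase_of_mem hvFc, hcn]; omega)
              (by rw [free_insert_left, card_erase_of_mem hwF, hcm]; omega)
              ?_ ?_ (by simp) hw2⟩
            · intro w'
              rw [free_insert_left, free_insert_left, mem_erase, mem_erase, hiff w',
                e.injective.ne_iff]
            · intro w' hw'
              rcases mem_insert.mp hw' with h | h
              · subst h; exact mem_insert_self _ _
              · exact mem_insert_of_mem (hsub w' h)
          · refine ⟨v, hvFc, ih (k+1) false false a₁ b₁ (insert v A) B
              (by rw [free_insert_left, card_erase_of_mem hvFc, hcn]; omega)
              hcm ?_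
              (fun w' hw' => mem_insert_of_mem (hsub w' hw')) (by simp) hw⟩
            intro w'
            rw [free_insert_left, mem_erase, hiff w']
            have : e w' ≠ v := fun h => hv ⟨w', h⟩
            tauto
      | false =>
        have ht₁ : t₁ = false := by
          cases t₁
          · rfl
          · exact absurd (hturn rfl) (by simp)
        subst ht₁
        intro v hvFc
        by_cases hv : ∃ w, e w = v
        · obtain ⟨w, rfl⟩ := hv
          have hwF : w ∈ univ \ (a₁ ∪ b₁) := (hiff w).mpr hvFc
          have hw2 := hw w hwF
          refine ih k true true a₁ (insert w b₁) A (insert (e w) B)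
            (by rw [free_insert_right, card_erase_of_mem hvFc, hcn]; omega)
            (by rw [free_insert_right, card_erase_of_mem hwF, hcm]; omega)
            ?_ hsub (fun _ => rfl) hw2
          intro w'
          rw [free_insert_right, free_insert_right, mem_erase, mem_erase, hiff w',
            e.injective.ne_iff]
        · refine ih (k+1) true false a₁ b₁ A (insert v B)
            (by rw [free_insert_right, card_erase_of_mem hvFc, hcn]; omega)
            hcm ?_ hsub (by simp) hw
          intro w'
          rw [free_insert_right, mem_erase, hiff w']
          have : e w' ≠ v := fun h => hv ⟨w', h⟩
          tauto



section Sum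
variable {α β : Type*} [Fintype α] [DecidableEq α] [Fintype β] [DecidableEq β]

open Finset

lemma mem_free_inl (w : α) (a₁ b₁ : Finset α) (a₂ b₂ : Finset β) :
    (Sum.inl w : α ⊕ β) ∈ univ \ ((a₁.map .inl ∪ a₂.map .inr) ∪ (b₁.map .inl ∪ b₂.map .inr))
      ↔ w ∈ univ \ (a₁ ∪ b₁) := by simp

lemma mem_free_inr (w : β) (a₁ b₁ : Finset α) (a₂ b₂ : Finset β) :
    (Sum.inr w : α ⊕ β) ∈ univ \ ((a₁.map .inl ∪ a₂.map .inr) ∪ (b₁.map .inl ∪ b₂.map .inr))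
      ↔ w ∈ univ \ (a₂ ∪ b₂) := by simp

lemma insert_inl (w : α) (s : Finset α) (t : Finset β) :
    insert (Sum.inl w : α ⊕ β) (s.map .inl ∪ t.map .inr) = (insert w s).map .inl ∪ t.map .inr := by
  rw [Finset.map_insert, Finset.insert_union]; rfl

lemma insert_inr (w : β) (s : Finset α) (t : Finset β) :
    insert (Sum.inr w : α ⊕ β) (s.map .inl ∪ t.map .inr) = s.map .inl ∪ (insert w t).map .inr := by
  rw [Finset.map_insert, Finset.union_insert]; rfl

lemma unionAnd (P1 : Finset α → Prop) (P2 : Finset β → Prop) (Pc : Finset (α ⊕ β) → Prop)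
    (h1 : ∀ {s s'}, s ⊆ s' → P1 s → P1 s') (h2 : ∀ {s s'}, s ⊆ s' → P2 s → P2 s')
    (hPc : ∀ a₁ a₂, P1 a₁ → P2 a₂ → Pc (a₁.map .inl ∪ a₂.map .inr)) :
    ∀ (n m₁ m₂ : ℕ) (t t₁ t₂ : Bool) (a₁ b₁ : Finset α) (a₂ b₂ : Finset β),
    n = m₁ + m₂ →
    (univ \ (a₁ ∪ b₁)).card = m₁ → (univ \ (a₂ ∪ b₂)).card = m₂ →
    ¬(t₁ = true ∧ t₂ = true) → (t₁ = true → t = true) → (t₂ = true → t = true) →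
    WinsAux (fun s _ => P1 s) m₁ t₁ a₁ b₁ → WinsAux (fun s _ => P2 s) m₂ t₂ a₂ b₂ →
    WinsAux (fun s _ => Pc s) n t (a₁.map .inl ∪ a₂.map .inr) (b₁.map .inl ∪ b₂.map .inr) := by
  intro n
  induction n with
  | zero =>
    intro m₁ m₂ t t₁ t₂ a₁ b₁ a₂ b₂ hn hcm₁ hcm₂ _ _ _ hw₁ hw₂
    obtain rfl : m₁ = 0 := by omega
    obtain rfl : m₂ = 0 := by omega
    have hP1 : P1 a₁ := by cases t₁ <;> exact hw₁
    have hP2 : P2 a₂ := by cases t₂ <;> exact hw₂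
    have := hPc a₁ a₂ hP1 hP2
    cases t <;> exact this
  | succ n ih =>
    intro m₁ m₂ t t₁ t₂ a₁ b₁ a₂ b₂ hn hcm₁ hcm₂ hnb ht₁ ht₂ hw₁ hw₂
    cases t with
    | false =>
      have ht₁' : t₁ = false := by revert ht₁; cases t₁ <;> simp
      have ht₂' : t₂ = false := by revert ht₂; cases t₂ <;> simp
      subst ht₁' ht₂'
      intro v hv
      cases v with
      | inl w =>
        have hwF : w ∈ univ \ (a₁ ∪ b₁) := (mem_free_inl w a₁ b₁ a₂ b₂).mp hv
        have hpos : 0 < m₁ := hcm₁ ▸ card_pos.mpr ⟨w, hwF⟩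
        obtain ⟨k, rfl⟩ : ∃ k, m₁ = k + 1 := ⟨m₁ - 1, by omega⟩
        have hw2 := hw₁ w hwF
        have := ih k m₂ true true false a₁ (insert w b₁) a₂ b₂ (by omega)
          (by rw [free_insert_right, card_erase_of_mem hwF, hcm₁]; omega) hcm₂
          (by simp) (fun _ => rfl) (by simp) hw2 hw₂
        rwa [show insert (Sum.inl w : α ⊕ β) (b₁.map .inl ∪ b₂.map .inr)
          = (insert w b₁).map .inl ∪ b₂.map .inr from insert_inl w b₁ b₂] 
      | inr w =>
        have hwF : w ∈ univ \ (a₂ ∪ b₂) := (mem_free_inr w a₁ b₁ a₂ b₂).mp hv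
        have hpos : 0 < m₂ := hcm₂ ▸ card_pos.mpr ⟨w, hwF⟩
        obtain ⟨k, rfl⟩ : ∃ k, m₂ = k + 1 := ⟨m₂ - 1, by omega⟩
        have hw2 := hw₂ w hwF
        have := ih m₁ k true false true a₁ b₁ a₂ (insert w b₂) (by omega)
          hcm₁ (by rw [free_insert_right, card_erase_of_mem hwF, hcm₂]; omega)
          (by simp) (by simp) (fun _ => rfl) hw₁ hw2
        rwa [show insert (Sum.inr w : α ⊕ β) (b₁.map .inl ∪ b₂.map .inr)
          = b₁.map .inl ∪ (insert w b₂).map .inr from insert_inr w b₁ b₂]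
    | true =>
      by_cases h₁ : t₁ = true ∧ 0 < m₁
      · obtain ⟨rfl, hpos⟩ := h₁
        have ht₂' : t₂ = false := by revert hnb; cases t₂ <;> simp
        subst ht₂'
        obtain ⟨k, rfl⟩ : ∃ k, m₁ = k + 1 := ⟨m₁ - 1, by omega⟩
        obtain ⟨w, hwF, hw2⟩ := hw₁
        refine ⟨Sum.inl w, (mem_free_inl w a₁ b₁ a₂ b₂).mpr hwF, ?_⟩
        rw [insert_inl]
        exact ih k m₂ false false false (insert w a₁) b₁ a₂ b₂ (by omega)
          (by rw [free_insert_left, card_erase_of_mem hwF, hcm₁]; omega) hcm₂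
          (by simp) (by simp) (by simp) hw2 hw₂
      · by_cases h₂ : t₂ = true ∧ 0 < m₂
        · obtain ⟨rfl, hpos⟩ := h₂
          have ht₁' : t₁ = false := by revert hnb; cases t₁ <;> simp
          subst ht₁'
          obtain ⟨k, rfl⟩ : ∃ k, m₂ = k + 1 := ⟨m₂ - 1, by omega⟩
          obtain ⟨w, hwF, hw2⟩ := hw₂
          refine ⟨Sum.inr w, (mem_free_inr w a₁ b₁ a₂ b₂).mpr hwF, ?_⟩
          rw [insert_inr]
          exact ih m₁ k false false false a₁ b₁ (insert w a₂) b₂ (by omega)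
            hcm₁ (by rw [free_insert_left, card_erase_of_mem hwF, hcm₂]; omega)
            (by simp) (by simp) (by simp) hw₁ hw2
        · -- both games effectively waiting
          have hw₁' : WinsAux (fun s _ => P1 s) m₁ false a₁ b₁ := by
            cases t₁
            · exact hw₁
            · obtain rfl : m₁ = 0 := by
                by_contra hc
                exact h₁ ⟨rfl, by omega⟩
              exact hw₁
          have hw₂' : WinsAux (fun s _ => P2 s) m₂ false a₂ b₂ := by
            cases t₂
            · exact hw₂
            · obtain rfl : m₂ = 0 := by
                by_contra hc
                exact h₂ ⟨rfl, by omega⟩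
              exact hw₂
          rcases (show 0 < m₁ ∨ 0 < m₂ by omega) with hpos | hpos
          · obtain ⟨k, rfl⟩ : ∃ k, m₁ = k + 1 := ⟨m₁ - 1, by omega⟩
            obtain ⟨w, hwF⟩ : (univ \ (a₁ ∪ b₁)).Nonempty := by rw [← card_pos, hcm₁]; omega
            have hw2 : WinsAux (fun s _ => P1 s) k false (insert w a₁) b₁ := by
              refine master P1 h1 ((k+1)+k) (k+1) k false false a₁ b₁ (insert w a₁) b₁
                (le_refl _) hcm₁
                (by rw [free_insert_left, card_erase_of_mem hwF, hcm₁]; omega)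
                (by rw [free_insert_left]; exact erase_subset _ _)
                ?_ (subset_insert _ _) (by simp) hw₁'
              intro x hx hx'
              rw [free_insert_left] at hx'
              by_cases hxw : x = w
              · subst hxw; exact mem_insert_self _ _
              · exact absurd (mem_erase.mpr ⟨hxw, hx⟩) hx'
            refine ⟨Sum.inl w, (mem_free_inl w a₁ b₁ a₂ b₂).mpr hwF, ?_⟩
            rw [insert_inl]
            exact ih k m₂ false false false (insert w a₁) b₁ a₂ b₂ (by omega)
              (by rw [free_insert_left, card_erase_of_mem hwF, hcm₁]; omega) hcm₂
              (by simp) (by simp) (by simp) hw2 hw₂'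
          · obtain ⟨k, rfl⟩ : ∃ k, m₂ = k + 1 := ⟨m₂ - 1, by omega⟩
            obtain ⟨w, hwF⟩ : (univ \ (a₂ ∪ b₂)).Nonempty := by rw [← card_pos, hcm₂]; omega
            have hw2 : WinsAux (fun s _ => P2 s) k false (insert w a₂) b₂ := by
              refine master P2 h2 ((k+1)+k) (k+1) k false false a₂ b₂ (insert w a₂) b₂
                (le_refl _) hcm₂
                (by rw [free_insert_left, card_erase_of_mem hwF, hcm₂]; omega)
                (by rw [free_insert_left]; exact erase_subset _ _)
                ?_ (subset_insert _ _) (by simp) hw₂'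
              intro x hx hx'
              rw [free_insert_left] at hx'
              by_cases hxw : x = w
              · subst hxw; exact mem_insert_self _ _
              · exact absurd (mem_erase.mpr ⟨hxw, hx⟩) hx'
            refine ⟨Sum.inr w, (mem_free_inr w a₁ b₁ a₂ b₂).mpr hwF, ?_⟩
            rw [insert_inr]
            exact ih m₁ k false false false a₁ b₁ (insert w a₂) b₂ (by omega)
              hcm₁ (by rw [free_insert_left, card_erase_of_mem hwF, hcm₂]; omega)
              (by simp) (by simp) (by simp) hw₁' hw2




variable {G : SimpleGraph α} {H : SimpleGraph β}

lemma tds_mono (G : SimpleGraph α) : ∀ {s s' : Finset α}, s ⊆ s' →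
    IsTotalDomSet G s → IsTotalDomSet G s' := by
  intro s s' hss h v
  obtain ⟨u, hu, ha⟩ := h v
  exact ⟨u, hss hu, ha⟩

lemma st_mono (G : SimpleGraph α) : ∀ {s s' : Finset α}, s ⊆ s' →
    (∃ v, ∀ u, G.Adj u v → u ∈ s) → (∃ v, ∀ u, G.Adj u v → u ∈ s') := by
  intro s s' hss ⟨v, hv⟩
  exact ⟨v, fun u hu => hss (hv u hu)⟩

lemma tds_sum (G : SimpleGraph α) (H : SimpleGraph β) :
    ∀ (a₁ : Finset α) (a₂ : Finset β), IsTotalDomSet G a₁ → IsTotalDomSet H a₂ →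
    IsTotalDomSet (G ⊕g H) (a₁.map .inl ∪ a₂.map .inr) := by
  intro a₁ a₂ h1 h2 v
  cases v with
  | inl x =>
    obtain ⟨u, hu, ha⟩ := h1 x
    exact ⟨Sum.inl u, by simp [hu], by simpa using ha⟩
  | inr x =>
    obtain ⟨u, hu, ha⟩ := h2 x
    exact ⟨Sum.inr u, by simp [hu], by simpa using ha⟩

lemma stq_inl (G : SimpleGraph α) (H : SimpleGraph β) :
    ∀ (s : Finset α) (A : Finset (α ⊕ β)),
    (∀ w ∈ s, (Function.Embedding.inl w : α ⊕ β) ∈ A) →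
    (∃ v, ∀ u, G.Adj u v → u ∈ s) →
    (∃ v : α ⊕ β, ∀ u, (G ⊕g H).Adj u v → u ∈ A) := by
  intro s A hsub ⟨v, hv⟩
  refine ⟨Sum.inl v, fun u hu => ?_⟩
  cases u with
  | inl u₁ => exact hsub u₁ (hv u₁ (by simpa using hu))
  | inr u₁ => simp at hu

lemma stq_inr (G : SimpleGraph α) (H : SimpleGraph β) :
    ∀ (s : Finset β) (A : Finset (α ⊕ β)),
    (∀ w ∈ s, (Function.Embedding.inr w : α ⊕ β) ∈ A) →
    (∃ v, ∀ u, H.Adj u v → u ∈ s) →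
    (∃ v : α ⊕ β, ∀ u, (G ⊕g H).Adj u v → u ∈ A) := by
  intro s A hsub ⟨v, hv⟩
  refine ⟨Sum.inr v, fun u hu => ?_⟩
  cases u with
  | inl u₁ => simp at hu
  | inr u₁ => exact hsub u₁ (hv u₁ (by simpa using hu))

/-- Dominator combines winning strategies in both components. -/
lemma dWins_sum {tG tH t : Bool}
    (hnb : ¬(tG = true ∧ tH = true)) (h1 : tG = true → t = true) (h2 : tH = true → t = true)
    (hG : DominatorWinsMBTD G tG) (hH : DominatorWinsMBTD H tH) :
    DominatorWinsMBTD (G ⊕g H) t := by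
  have key := unionAnd (IsTotalDomSet G) (IsTotalDomSet H) (IsTotalDomSet (G ⊕g H))
    (tds_mono G) (tds_mono H) (tds_sum G H)
    (Fintype.card α + Fintype.card β) (Fintype.card α) (Fintype.card β) t tG tH ∅ ∅ ∅ ∅
    rfl (by simp) (by simp) hnb h1 h2 hG hH
  show WinsAux (fun s _ => IsTotalDomSet (G ⊕g H) s) (Fintype.card (α ⊕ β)) t ∅ ∅
  rw [Fintype.card_sum]
  simpa using key

/-- Staller pursues a winning strategy in the left component. -/
lemma sWins_suml {d d' : Bool} (cond : (!d) = true → (!d') = true)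
    (hG : StallerWinsMBTD G d) : StallerWinsMBTD (G ⊕g H) d' := by
  exact pursuit Function.Embedding.inl (fun s => ∃ v, ∀ u, G.Adj u v → u ∈ s) (st_mono G)
    (fun A => ∃ v : α ⊕ β, ∀ u, (G ⊕g H).Adj u v → u ∈ A) (stq_inl G H)
    (st_mono (G ⊕g H))
    (Fintype.card (α ⊕ β)) (Fintype.card α) (!d') (!d) ∅ ∅ ∅ ∅
    (by simp) (by simp) (by simp) (by simp) cond hG

/-- Staller pursues a winning strategy in the right component. -/
lemma sWins_sumr {d d' : Bool} (cond : (!d) = true → (!d') = true)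
    (hH : StallerWinsMBTD H d) : StallerWinsMBTD (G ⊕g H) d' := by
  exact pursuit Function.Embedding.inr (fun s => ∃ v, ∀ u, H.Adj u v → u ∈ s) (st_mono H)
    (fun A => ∃ v : α ⊕ β, ∀ u, (G ⊕g H).Adj u v → u ∈ A) (stq_inr G H)
    (st_mono (G ⊕g H))
    (Fintype.card (α ⊕ β)) (Fintype.card β) (!d') (!d) ∅ ∅ ∅ ∅
    (by simp) (by simp) (by simp) (by simp) cond hH

lemma staller_nonempty (h : StallerWinsMBTD G false) : Nonempty α := by
  unfold StallerWinsMBTD at h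
  rcases hc : Fintype.card α with _ | k
  · rw [hc] at h
    obtain ⟨v, _⟩ := (h : ∃ v : α, ∀ u, G.Adj u v → u ∈ (∅ : Finset α))
    exact ⟨v⟩
  · rw [hc] at h
    obtain ⟨v, _, _⟩ := (h : ∃ v ∈ _, WinsAux _ k false (insert v ∅) ∅)
    exact ⟨v⟩

/-- Staller as second player on the union of two graphs where she wins moving first. -/
lemma sWins_sum_second (hG : StallerWinsMBTD G false) (hH : StallerWinsMBTD H false) :
    StallerWinsMBTD (G ⊕g H) true := by
  have hα : Nonempty α := staller_nonempty hG
  have hpos : 0 < Fintype.card (α ⊕ β) := by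
    rw [Fintype.card_sum]
    have := Fintype.card_pos_iff.mpr hα
    omega
  obtain ⟨k, hk⟩ : ∃ k, Fintype.card (α ⊕ β) = k + 1 :=
    ⟨Fintype.card (α ⊕ β) - 1, by omega⟩
  show WinsAux (fun a _ => ∃ v : α ⊕ β, ∀ u, (G ⊕g H).Adj u v → u ∈ a)
    (Fintype.card (α ⊕ β)) false ∅ ∅
  rw [hk]
  intro v hv
  cases v with
  | inl w =>
    exact pursuit Function.Embedding.inr (fun s => ∃ v, ∀ u, H.Adj u v → u ∈ s) (st_mono H)
      (fun A => ∃ v : α ⊕ β, ∀ u, (G ⊕g H).Adj u v → u ∈ A) (stq_inr G H)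
      (st_mono (G ⊕g H))
      k (Fintype.card β) true true ∅ ∅ ∅ (insert (Sum.inl w) ∅)
      (by rw [free_insert_right, Finset.card_erase_of_mem (by simp)]; simp [hk])
      (by simp) (by simp) (by simp) (by simp) hH
  | inr w =>
    exact pursuit Function.Embedding.inl (fun s => ∃ v, ∀ u, G.Adj u v → u ∈ s) (st_mono G)
      (fun A => ∃ v : α ⊕ β, ∀ u, (G ⊕g H).Adj u v → u ∈ A) (stq_inl G H)
      (st_mono (G ⊕g H))
      k (Fintype.card α) true true ∅ ∅ ∅ (insert (Sum.inr w) ∅)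
      (by rw [free_insert_right, Finset.card_erase_of_mem (by simp)]; simp [hk])
      (by simp) (by simp) (by simp) (by simp) hG

end Sum

/-- the outcome of the MBTD game on a disjoint union of graphs. -/
theorem stmt4 {α β : Type*} [Fintype α] [DecidableEq α] [Fintype β] [DecidableEq β]
    (G : SimpleGraph α) (H : SimpleGraph β) :
    (IsD G ∧ IsD H → IsD (G ⊕g H)) ∧
    ((IsD G ∧ IsN H) ∨ (IsN G ∧ IsD H) → IsN (G ⊕g H)) ∧
    (IsN G ∧ IsN H → IsS (G ⊕g H)) ∧
    (IsS G ∨ IsS H → IsS (G ⊕g H)) := by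
  refine ⟨?_, ?_, ?_, ?_⟩
  · rintro ⟨⟨hG1, hG2⟩, ⟨hH1, hH2⟩⟩
    constructor
    · exact dWins_sum (by simp) (fun _ => rfl) (by simp) hG1 hH2
    · exact dWins_sum (by simp) (by simp) (by simp) hG2 hH2
  · rintro (⟨⟨hG1, hG2⟩, ⟨hH1, hH2⟩⟩ | ⟨⟨hG1, hG2⟩, ⟨hH1, hH2⟩⟩)
    · exact ⟨dWins_sum (by simp) (by simp) (fun _ => rfl) hG2 hH1,
        sWins_sumr (fun _ => rfl) hH2⟩
    · exact ⟨dWins_sum (by simp) (fun _ => rfl) (by simp) hG1 hH2,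
        sWins_suml (fun _ => rfl) hG2⟩
  · rintro ⟨⟨hG1, hG2⟩, ⟨hH1, hH2⟩⟩
    exact ⟨sWins_sum_second hG2 hH2, sWins_suml (fun _ => rfl) hG2⟩
  · rintro (⟨hG1, hG2⟩ | ⟨hH1, hH2⟩)
    · exact ⟨sWins_suml (by simp) hG1, sWins_suml (fun _ => rfl) hG2⟩
    · exact ⟨sWins_sumr (by simp) hH1, sWins_sumr (fun _ => rfl) hH2⟩

end MBTD
end

section
/- For all integers k ≥ 1 and m ≥ 3, the Cartesian product P_{2k} □ C_m of the path on 2k vertices with the cycle on m vertices is a D graph for the Maker–Breaker total domination game. -/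
namespace MBTD

variable {V : Type*} [Fintype V] [DecidableEq V]

/-! ### Auxiliary material for the pairing strategy -/

lemma sdiff_insert_left (a b : Finset V) (v : V) :
    Finset.univ \ (insert v a ∪ b) = (Finset.univ \ (a ∪ b)).erase v := by
  ext x
  simp only [Finset.mem_sdiff, Finset.mem_union, Finset.mem_insert, Finset.mem_erase,
    Finset.mem_univ, true_and]
  tauto

lemma sdiff_insert_right (a b : Finset V) (v : V) :
    Finset.univ \ (a ∪ insert v b) = (Finset.univ \ (a ∪ b)).erase v := by
  ext x
  simp only [Finset.mem_sdiff, Finset.mem_union, Finset.mem_insert, Finset.mem_erase,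
    Finset.mem_univ, true_and]
  tauto

/-- The generic pairing strategy: if `f` is a fixed-point-free involution of the vertex set
such that any set meeting every pair `{v, f v}` is winning, then the tracked player wins from
any position (with any player to move) in which every opponent vertex has its partner already
claimed by the tracked player. -/
lemma pairing_wins (win : Finset V → Finset V → Prop) (f : V → V)
    (hff : ∀ v, f (f v) = v) (hne : ∀ v, f v ≠ v)
    (hwin : ∀ a b : Finset V, (∀ v, v ∈ a ∨ f v ∈ a) → win a b) :
    ∀ n : ℕ, ∀ (turn : Bool) (a b : Finset V),
      n = (Finset.univ \ (a ∪ b)).card →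
      (∀ v ∈ b, f v ∈ a) →
      WinsAux win n turn a b := by
  intro n
  induction n using Nat.strong_induction_on with
  | _ n ih =>
  intro turn a b hn hI
  match n with
  | 0 =>
    show win a b
    apply hwin a b
    intro v
    have hv : v ∈ a ∪ b := by
      by_contra h
      have hmem : v ∈ Finset.univ \ (a ∪ b) := by simp [h]
      have := Finset.card_eq_zero.mp hn.symm
      rw [this] at hmem
      exact absurd hmem (Finset.notMem_empty v)
    rcases Finset.mem_union.mp hv with h | h
    · exact Or.inl h
    · exact Or.inr (hI v h)
  | n + 1 =>
  cases turn with
  | true =>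
    have hne0 : (Finset.univ \ (a ∪ b)).Nonempty := by
      rw [← Finset.card_pos, ← hn]; omega
    obtain ⟨v, hv⟩ := hne0
    refine ⟨v, hv, ?_⟩
    apply ih n (Nat.lt_succ_self n)
    · rw [sdiff_insert_left, Finset.card_erase_of_mem hv, ← hn]; omega
    · intro u hu
      exact Finset.mem_insert_of_mem (hI u hu)
  | false =>
    intro w hw
    simp only [Finset.mem_sdiff, Finset.mem_union] at hw
    obtain ⟨-, hw2⟩ := hw
    push_neg at hw2
    obtain ⟨hwa, hwb⟩ := hw2
    have hw' : w ∈ Finset.univ \ (a ∪ b) := by simp [hwa, hwb]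
    by_cases hfw : f w ∈ a
    · apply ih n (Nat.lt_succ_self n)
      · rw [sdiff_insert_right, Finset.card_erase_of_mem hw', ← hn]; omega
      · intro u hu
        rcases Finset.mem_insert.mp hu with rfl | hu
        · exact hfw
        · exact hI u hu
    · have hfwb : f w ∉ b := by
        intro h
        exact hwa (by rw [← hff w]; exact hI _ h)
      have hfwmem : f w ∈ Finset.univ \ (a ∪ insert w b) := by
        simp [hfw, hfwb, hne w]
      match n with
      | 0 =>
        exfalso
        have hsub : ({w, f w} : Finset V) ⊆ Finset.univ \ (a ∪ b) := by
          intro x hx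
          rcases Finset.mem_insert.mp hx with rfl | hx
          · exact hw'
          · simp_all
        have h2 : ({w, f w} : Finset V).card = 2 :=
          Finset.card_pair (Ne.symm (hne w))
        have := Finset.card_le_card hsub
        omega
      | n' + 1 =>
        refine ⟨f w, hfwmem, ?_⟩
        apply ih n' (by omega)
        · rw [sdiff_insert_left, sdiff_insert_right,
            Finset.card_erase_of_mem, Finset.card_erase_of_mem hw', ← hn]
          · omega
          · exact Finset.mem_erase.mpr ⟨hne w, Finset.mem_sdiff.mpr
              ⟨Finset.mem_univ _, fun h => (Finset.mem_union.mp h).elim hfw hfwb⟩⟩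
        · intro u hu
          rcases Finset.mem_insert.mp hu with rfl | hu
          · exact Finset.mem_insert_self _ _
          · exact Finset.mem_insert_of_mem (hI u hu)

/-- The diagonal pairing on `Fin (2*k) × Fin m`: it pairs `(2i, j)` with `(2i+1, j+1)`. -/
def pairFn (k m : ℕ) (x : Fin (2*k) × Fin m) : Fin (2*k) × Fin m :=
  if x.1.val % 2 = 0
  then (⟨(x.1.val + 1) % (2*k), Nat.mod_lt _ x.1.pos⟩,
        ⟨(x.2.val + 1) % m, Nat.mod_lt _ x.2.pos⟩)
  else (⟨x.1.val - 1, Nat.lt_of_le_of_lt (Nat.sub_le _ _) x.1.isLt⟩,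
        ⟨(x.2.val + (m - 1)) % m, Nat.mod_lt _ x.2.pos⟩)

lemma pairFn_spec_even (k m : ℕ) (x : Fin (2*k) × Fin m) (h : x.1.val % 2 = 0) :
    (pairFn k m x).1.val = (x.1.val + 1) % (2*k) ∧ (pairFn k m x).2.val = (x.2.val + 1) % m := by
  simp only [pairFn, if_pos h]
  trivial

lemma pairFn_spec_odd (k m : ℕ) (x : Fin (2*k) × Fin m) (h : ¬ x.1.val % 2 = 0) :
    (pairFn k m x).1.val = x.1.val - 1 ∧ (pairFn k m x).2.val = (x.2.val + (m-1)) % m := by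
  simp only [pairFn, if_neg h]
  trivial

/-- for `k ≥ 1` and `m ≥ 3`, the graph `P_{2k} □ C_m` is a `𝒟` graph. -/
theorem stmt14 (k m : ℕ) (hk : 1 ≤ k) (hm : 3 ≤ m) :
    IsD (SimpleGraph.pathGraph (2 * k) □ SimpleGraph.cycleGraph m) := by
  have hmpos : 0 < m := by omega
  have L1 : ∀ j, j < m → ((j + (m-1)) % m + 1) % m = j := by
    intro j hj
    rw [Nat.mod_add_mod]
    have h : j + (m-1) + 1 = j + m := by omega
    rw [h, Nat.add_mod_right]
    exact Nat.mod_eq_of_lt hj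
  have L2 : ∀ j, j < m → ((j + 1) % m + (m-1)) % m = j := by
    intro j hj
    rw [Nat.mod_add_mod]
    have h : j + 1 + (m-1) = j + m := by omega
    rw [h, Nat.add_mod_right]
    exact Nat.mod_eq_of_lt hj
  have hcyc : ∀ u v : Fin m, v.val = (u.val + 1) % m →
      (SimpleGraph.cycleGraph m).Adj u v := by
    intro u v h
    rw [SimpleGraph.cycleGraph_adj']
    right
    rw [Fin.sub_def]
    simp only [Fin.val_mk]
    by_cases hw : u.val + 1 = m
    · have hv0 : v.val = 0 := by rw [h, hw, Nat.mod_self]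
      have h1 : m - u.val + v.val = 1 := by omega
      rw [h1]
      exact Nat.mod_eq_of_lt (by omega)
    · have hv : v.val = u.val + 1 := by
        rw [h]; exact Nat.mod_eq_of_lt (by omega)
      have hu := u.isLt
      have h1 : m - u.val + v.val = 1 + m := by omega
      rw [h1, Nat.add_mod_right]
      exact Nat.mod_eq_of_lt (by omega)
  -- the pairing is an involution
  have hff : ∀ x, pairFn k m (pairFn k m x) = x := by
    intro x
    by_cases hr : x.1.val % 2 = 0
    · obtain ⟨e1, e2⟩ := pairFn_spec_even k m x hr
      have hlt : x.1.val + 1 < 2*k := by have := x.1.isLt; omega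
      rw [Nat.mod_eq_of_lt hlt] at e1
      have hr' : ¬ (pairFn k m x).1.val % 2 = 0 := by rw [e1]; omega
      obtain ⟨e3, e4⟩ := pairFn_spec_odd k m (pairFn k m x) hr'
      rw [Prod.ext_iff, Fin.ext_iff, Fin.ext_iff]
      constructor
      · rw [e3, e1]; omega
      · rw [e4, e2]; exact L2 _ x.2.isLt
    · obtain ⟨e1, e2⟩ := pairFn_spec_odd k m x hr
      have hr' : (pairFn k m x).1.val % 2 = 0 := by rw [e1]; omega
      obtain ⟨e3, e4⟩ := pairFn_spec_even k m (pairFn k m x) hr'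
      rw [Prod.ext_iff, Fin.ext_iff, Fin.ext_iff]
      constructor
      · rw [e3, e1]
        have h1 : x.1.val - 1 + 1 = x.1.val := by omega
        rw [h1]
        exact Nat.mod_eq_of_lt x.1.isLt
      · rw [e4, e2]; exact L1 _ x.2.isLt
  -- the pairing is fixed-point-free
  have hne : ∀ x, pairFn k m x ≠ x := by
    intro x hx
    have h1 : (pairFn k m x).1.val = x.1.val := by rw [hx]
    by_cases hr : x.1.val % 2 = 0
    · obtain ⟨e1, -⟩ := pairFn_spec_even k m x hr
      have hlt : x.1.val + 1 < 2*k := by have := x.1.isLt; omega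
      rw [Nat.mod_eq_of_lt hlt] at e1
      omega
    · obtain ⟨e1, -⟩ := pairFn_spec_odd k m x hr
      omega
  -- every open neighbourhood contains a full pair
  have hdom : ∀ x : Fin (2*k) × Fin m,
      ∃ u, (SimpleGraph.pathGraph (2*k) □ SimpleGraph.cycleGraph m).Adj u x ∧
      (SimpleGraph.pathGraph (2*k) □ SimpleGraph.cycleGraph m).Adj (pairFn k m u) x := by
    intro x
    by_cases hr : x.1.val % 2 = 0
    · refine ⟨(x.1, ⟨(x.2.val + (m-1)) % m, Nat.mod_lt _ hmpos⟩), ?_, ?_⟩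
      · exact SimpleGraph.boxProd_adj.mpr (Or.inr ⟨hcyc _ _ (L1 _ x.2.isLt).symm, rfl⟩)
      · obtain ⟨e1, e2⟩ :=
          pairFn_spec_even k m (x.1, ⟨(x.2.val + (m-1)) % m, Nat.mod_lt _ hmpos⟩) hr
        dsimp only at e1 e2
        refine SimpleGraph.boxProd_adj.mpr (Or.inl ⟨?_, ?_⟩)
        · rw [SimpleGraph.pathGraph_adj]
          right
          rw [e1]
          have hlt : x.1.val + 1 < 2*k := by have := x.1.isLt; omega
          rw [Nat.mod_eq_of_lt hlt]
        · rw [Fin.ext_iff, e2]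
          exact L1 _ x.2.isLt
    · have hx1 : 0 < x.1.val := by omega
      have hlt' : x.1.val - 1 < 2*k := Nat.lt_of_le_of_lt (Nat.sub_le _ _) x.1.isLt
      have hr' : ((⟨x.1.val - 1, hlt'⟩ : Fin (2*k)), x.2).1.val % 2 = 0 := by
        simp only [Fin.val_mk]; omega
      refine ⟨(⟨x.1.val - 1, hlt'⟩, x.2), ?_, ?_⟩
      · refine SimpleGraph.boxProd_adj.mpr (Or.inl ⟨?_, rfl⟩)
        rw [SimpleGraph.pathGraph_adj]
        left
        simp only [Fin.val_mk]
        omega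
      · obtain ⟨e1, e2⟩ := pairFn_spec_even k m ((⟨x.1.val - 1, hlt'⟩ : Fin (2*k)), x.2) hr'
        dsimp only at e1 e2
        refine SimpleGraph.boxProd_adj.mpr (Or.inr ⟨?_, ?_⟩)
        · exact (hcyc x.2 _ e2).symm
        · rw [Fin.ext_iff, e1]
          have h1 : x.1.val - 1 + 1 = x.1.val := by omega
          rw [h1]
          exact Nat.mod_eq_of_lt x.1.isLt
  -- any transversal of the pairing is a total dominating set
  have hwin : ∀ a b : Finset (Fin (2*k) × Fin m),
      (∀ v, v ∈ a ∨ pairFn k m v ∈ a) →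
      IsTotalDomSet (SimpleGraph.pathGraph (2*k) □ SimpleGraph.cycleGraph m) a := by
    intro a b h x
    obtain ⟨u, h1, h2⟩ := hdom x
    rcases h u with hu | hu
    · exact ⟨u, hu, h1⟩
    · exact ⟨pairFn k m u, hu, h2⟩
  constructor <;>
  · apply pairing_wins _ (pairFn k m) hff hne (fun a b h => hwin a b h)
    · simp
    · simp
  
end MBTD
end
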